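/- arXiv:1811.03398 — 4 statements merged into one kernel-verified Lean document; each statement's English description precedes it below -/
import Mathlib

section
/- For q(z) = (1+Az)/(1+Bz) with -1 ≤ B < A ≤ 1, the quantity 1 + z q''(z)/q'(z) - z q'(z)/q(z) equals (1 - A B z²)/((1+Az)(1+Bz)), and its real part is strictly positive for all z in the open unit disk. -/
open Complex Metric

lemma aux_ne_zero (c z : ℂ) (hc : ‖c‖ ≤ 1) (hz : ‖z‖ < 1) :
    1 + c * z ≠ 0 := by
  intro h
  have hcz : c * z = -1 := by linear_combination h
  have habs : ‖c * z‖ = 1 := by rw [hcz]; simp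
  rw [norm_mul] at habs
  nlinarith [norm_nonneg c, norm_nonneg z]

lemma aux_half_lt (w : ℂ) (hw : ‖w‖ < 1) : 1 / 2 < (1 / (1 + w)).re := by
  have hne : 1 + w ≠ 0 := by
    simpa using aux_ne_zero 1 w (by simp) hw
  have hpos : 0 < Complex.normSq (1 + w) := Complex.normSq_pos.mpr hne
  have h1 : (1 / (1 + w)).re = (1 + w).re / Complex.normSq (1 + w) := by
    rw [one_div, Complex.inv_re]
  rw [h1]
  rw [lt_div_iff₀ hpos]
  have hsq : Complex.normSq w < 1 := by
    have := Complex.sq_norm w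
    nlinarith [norm_nonneg w]
  have he : Complex.normSq (1 + w) = 1 + 2 * w.re + Complex.normSq w := by
    simp [Complex.normSq_apply, Complex.add_re, Complex.add_im]; ring
  simp only [Complex.add_re, Complex.one_re]
  rw [he]
  linarith

theorem stmt_1 (A B : ℝ) (hB : -1 ≤ B) (hAB : B < A) (hA : A ≤ 1)
    (q : ℂ → ℂ) (hq : ∀ z, q z = (1 + (A : ℂ) * z) / (1 + (B : ℂ) * z)) :
    ∀ z ∈ ball (0 : ℂ) 1,
      1 + z * deriv (deriv q) z / deriv q z - z * deriv q z / q z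
        = (1 - (A : ℂ) * B * z ^ 2) / ((1 + (A : ℂ) * z) * (1 + (B : ℂ) * z)) ∧
      0 < ((1 - (A : ℂ) * B * z ^ 2) / ((1 + (A : ℂ) * z) * (1 + (B : ℂ) * z))).re := by
  have hAabs : ‖(A : ℂ)‖ ≤ 1 := by
    rw [Complex.norm_real, Real.norm_eq_abs]; rw [abs_le]; constructor <;> linarith
  have hBabs : ‖(B : ℂ)‖ ≤ 1 := by
    rw [Complex.norm_real, Real.norm_eq_abs]; rw [abs_le]; constructor <;> linarith
  have hABne : (A : ℂ) - B ≠ 0 := by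
    intro h
    have : (A : ℝ) = B := by exact_mod_cast sub_eq_zero.mp h
    linarith
  intro z hz
  have hzabs : ‖z‖ < 1 := by
    simpa [mem_ball, Complex.dist_eq] using hz
  have hA0 : (1 : ℂ) + A * z ≠ 0 := aux_ne_zero _ _ hAabs hzabs
  have hB0 : (1 : ℂ) + B * z ≠ 0 := aux_ne_zero _ _ hBabs hzabs
  -- derivative of q on the ball
  have hderiv : ∀ w ∈ ball (0 : ℂ) 1,
      HasDerivAt q (((A : ℂ) - B) / (1 + (B : ℂ) * w) ^ 2) w := by
    intro w hw
    have hwabs : ‖w‖ < 1 := by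
      simpa [mem_ball, Complex.dist_eq] using hw
    have hB0w : (1 : ℂ) + B * w ≠ 0 := aux_ne_zero _ _ hBabs hwabs
    have h1 : HasDerivAt (fun w : ℂ => 1 + (A : ℂ) * w) A w := by
      simpa using ((hasDerivAt_id w).const_mul (A : ℂ)).const_add 1
    have h2 : HasDerivAt (fun w : ℂ => 1 + (B : ℂ) * w) B w := by
      simpa using ((hasDerivAt_id w).const_mul (B : ℂ)).const_add 1
    have h3 : HasDerivAt (fun w : ℂ => (1 + (A : ℂ) * w) / (1 + (B : ℂ) * w)) _ w :=
      h1.div h2 hB0w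
    have hqe : q = fun w : ℂ => (1 + (A : ℂ) * w) / (1 + (B : ℂ) * w) := funext hq
    rw [hqe]
    convert h3 using 1
    ring
  have hdq : deriv q z = ((A : ℂ) - B) / (1 + (B : ℂ) * z) ^ 2 :=
    (hderiv z hz).deriv
  -- second derivative
  have heq : deriv q =ᶠ[nhds z] fun w => ((A : ℂ) - B) / (1 + (B : ℂ) * w) ^ 2 := by
    filter_upwards [isOpen_ball.mem_nhds hz] with w hw
    exact (hderiv w hw).deriv
  have hg : HasDerivAt (fun w => ((A : ℂ) - B) / (1 + (B : ℂ) * w) ^ 2)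
      ((0 * (1 + (B : ℂ) * z) ^ 2 - ((A : ℂ) - B) * (2 * (1 + (B : ℂ) * z) ^ 1 * B))
        / ((1 + (B : ℂ) * z) ^ 2) ^ 2) z := by
    have h2 : HasDerivAt (fun w : ℂ => 1 + (B : ℂ) * w) B z := by
      simpa using ((hasDerivAt_id z).const_mul (B : ℂ)).const_add 1
    exact (hasDerivAt_const z ((A : ℂ) - B)).div (h2.pow 2) (pow_ne_zero 2 hB0)
  have hddq : deriv (deriv q) z
      = (0 * (1 + (B : ℂ) * z) ^ 2 - ((A : ℂ) - B) * (2 * (1 + (B : ℂ) * z) ^ 1 * B))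
        / ((1 + (B : ℂ) * z) ^ 2) ^ 2 := by
    rw [heq.deriv_eq]
    exact hg.deriv
  constructor
  · rw [hddq, hdq, hq z]
    have hA0' : 1 + z * (A : ℂ) ≠ 0 := by rwa [mul_comm]
    have hB0' : 1 + z * (B : ℂ) ≠ 0 := by rwa [mul_comm]
    field_simp
    ring
  · have hrw : (1 - (A : ℂ) * B * z ^ 2) / ((1 + (A : ℂ) * z) * (1 + (B : ℂ) * z))
        = -1 + 1 / (1 + (A : ℂ) * z) + 1 / (1 + (B : ℂ) * z) := by
      field_simp
      ring
    rw [hrw]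
    have hA' : 1 / 2 < (1 / (1 + (A : ℂ) * z)).re := by
      apply aux_half_lt
      rw [norm_mul]
      nlinarith [norm_nonneg (A : ℂ), norm_nonneg z]
    have hB' : 1 / 2 < (1 / (1 + (B : ℂ) * z)).re := by
      apply aux_half_lt
      rw [norm_mul]
      nlinarith [norm_nonneg (B : ℂ), norm_nonneg z]
    simp only [Complex.add_re, Complex.neg_re, Complex.one_re]
    linarith
end

section
/- Let q(z) = (1+Az)/(1+Bz) with -1 ≤ B < A ≤ 1 and 0 < |B| < 1, and let ζ ∈ ℂ. The inequality Re(1 + z q''(z)/q'(z)) > max{0, -Re ζ} holds for all z in the open unit disk if and only if Re ζ ≥ (|B| - 1)/(|B| + 1). -/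
open Complex Metric

set_option maxHeartbeats 1600000 in
theorem stmt_8 (A B : ℝ) (hB : -1 ≤ B) (hAB : B < A) (hA : A ≤ 1)
    (hB0 : B ≠ 0) (hBlt : |B| < 1) (ζ : ℂ)
    (q : ℂ → ℂ) (hq : ∀ z, q z = (1 + (A : ℂ) * z) / (1 + (B : ℂ) * z)) :
    (∀ z ∈ ball (0 : ℂ) 1,
        (1 + z * deriv (deriv q) z / deriv q z).re > max 0 (-ζ.re)) ↔
      ζ.re ≥ (|B| - 1) / (|B| + 1) := by
  have hABc : (A:ℂ) - B ≠ 0 := sub_ne_zero.mpr (by exact_mod_cast hAB.ne')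
  set r := |B| with hrdef
  have hr0 : 0 < r := abs_pos.mpr hB0
  have hr1 : r < 1 := hBlt
  -- denominator nonvanishing on the ball
  have hden : ∀ z : ℂ, ‖z‖ < 1 → 1 + (B:ℂ)*z ≠ 0 := by
    intro z hz h
    have h0 : (B:ℂ)*z = -1 := by linear_combination h
    have h1 : ‖(B:ℂ)*z‖ = 1 := by rw [h0]; simp
    have h2 : ‖(B:ℂ)*z‖ < 1 := by
      rw [norm_mul, Complex.norm_real]
      calc ‖B‖ * ‖z‖ ≤ 1 * ‖z‖ := by
            gcongr; simpa [Real.norm_eq_abs] using hBlt.le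
        _ < 1 := by simpa using hz
    linarith [h1.symm ▸ h2]
  -- first derivative
  have hd1 : ∀ z : ℂ, 1 + (B:ℂ)*z ≠ 0 → HasDerivAt q (((A:ℂ)-B)/(1+(B:ℂ)*z)^2) z := by
    intro z hz
    have h1 : HasDerivAt (fun w : ℂ => 1 + (A:ℂ)*w) A z := by
      simpa using ((hasDerivAt_id z).const_mul (A:ℂ)).const_add 1
    have h2 : HasDerivAt (fun w : ℂ => 1 + (B:ℂ)*w) B z := by
      simpa using ((hasDerivAt_id z).const_mul (B:ℂ)).const_add 1
    have h3 : HasDerivAt (fun w : ℂ => (1+(A:ℂ)*w)/(1+(B:ℂ)*w)) _ z := h1.div h2 hz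
    have heq : q = fun w => (1+(A:ℂ)*w)/(1+(B:ℂ)*w) := funext hq
    rw [heq]
    convert h3 using 1
    ring
  have hopen : IsOpen {w : ℂ | 1 + (B:ℂ)*w ≠ 0} := by
    have : Continuous fun w : ℂ => 1 + (B:ℂ)*w := by continuity
    exact isOpen_ne.preimage this
  -- second derivative
  have hd2 : ∀ z : ℂ, 1 + (B:ℂ)*z ≠ 0 →
      deriv (deriv q) z = -2*B*((A:ℂ)-B)/(1+(B:ℂ)*z)^3 := by
    intro z hz
    have hev : deriv q =ᶠ[nhds z] fun w => ((A:ℂ)-B)/(1+(B:ℂ)*w)^2 :=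
      Filter.eventuallyEq_of_mem (hopen.mem_nhds hz) (fun w hw => (hd1 w hw).deriv)
    rw [hev.deriv_eq]
    have h2 : HasDerivAt (fun w : ℂ => 1 + (B:ℂ)*w) B z := by
      simpa using ((hasDerivAt_id z).const_mul (B:ℂ)).const_add 1
    have hp : HasDerivAt (fun w : ℂ => (1+(B:ℂ)*w)^2) (2*(1+(B:ℂ)*z)^1*B) z := h2.pow 2
    have hq2 := (hasDerivAt_const z ((A:ℂ)-B)).div hp (pow_ne_zero 2 hz)
    rw [(show HasDerivAt (fun w : ℂ => ((A:ℂ)-B)/(1+(B:ℂ)*w)^2) _ z from hq2).deriv]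
    field_simp
    ring
  -- the expression simplifies
  have hE : ∀ z : ℂ, ‖z‖ < 1 →
      1 + z * deriv (deriv q) z / deriv q z = (1 - (B:ℂ)*z)/(1+(B:ℂ)*z) := by
    intro z hz
    have hne := hden z hz
    rw [hd2 z hne, (hd1 z hne).deriv]
    have hne' : 1 + z*(B:ℂ) ≠ 0 := by rwa [mul_comm]
    field_simp
    ring
  -- strict lower bound for the real part
  have hlow : ∀ z : ℂ, ‖z‖ < 1 →
      ((1 - (B:ℂ)*z)/(1+(B:ℂ)*z)).re > (1-r)/(1+r) := by
    intro z hz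
    have hne := hden z hz
    set x := z.re with hx
    set y := z.im with hy
    have hxy : x^2 + y^2 < 1 := by
      have h1 : x^2 + y^2 = ‖z‖^2 := by
        rw [Complex.sq_norm, Complex.normSq_apply]; ring
      nlinarith [norm_nonneg z]
    have hDs : Complex.normSq (1+(B:ℂ)*z) = (1+B*x)^2+(B*y)^2 := by
      simp [Complex.normSq_apply, Complex.add_re, Complex.add_im, Complex.mul_re,
        Complex.mul_im]
      ring
    have hD : 0 < (1+B*x)^2 + (B*y)^2 := hDs ▸ Complex.normSq_pos.mpr hne
    have hre : ((1 - (B:ℂ)*z)/(1+(B:ℂ)*z)).re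
        = (1 - B^2*(x^2+y^2))/((1+B*x)^2 + (B*y)^2) := by
      rw [Complex.div_re, hDs, ← add_div]
      congr 1
      simp [Complex.sub_re, Complex.sub_im, Complex.add_re, Complex.add_im,
        Complex.mul_re, Complex.mul_im]
      ring
    rw [hre]
    rw [gt_iff_lt, div_lt_div_iff₀ (by positivity) hD]
    have hx1 : x^2 < 1 := by nlinarith [sq_nonneg y]
    have hx2 : -1 < x ∧ x < 1 := abs_lt.mp (by nlinarith [abs_nonneg x, _root_.sq_abs x])
    rcases hB0.lt_or_gt with hBn | hBp
    · have hrB : r = -B := by rw [hrdef, abs_of_neg hBn]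
      rw [hrB]
      have hc1 : (0:ℝ) < 1 + B := by linarith [hrB ▸ hr1]
      nlinarith [mul_pos (mul_pos (neg_pos.mpr hBn) (neg_pos.mpr hBn))
          (by nlinarith : (0:ℝ) < 1 - (x^2+y^2)),
        mul_pos (mul_pos (neg_pos.mpr hBn) hc1) (by linarith [hx2.1] : (0:ℝ) < 1+x)]
    · have hrB : r = B := by rw [hrdef, abs_of_pos hBp]
      rw [hrB]
      have hc1 : (0:ℝ) < 1 - B := by linarith [hrB ▸ hr1]
      nlinarith [mul_pos (mul_pos hBp hBp) (by nlinarith : (0:ℝ) < 1 - (x^2+y^2)),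
        mul_pos (mul_pos hBp hc1) (by linarith [hx2.2] : (0:ℝ) < 1-x)]
  have hLpos : 0 < (1-r)/(1+r) := div_pos (by linarith) (by linarith)
  have hLneg : (r-1)/(r+1) = -((1-r)/(1+r)) := by ring
  constructor
  · -- forward direction
    intro H
    by_contra hc
    push_neg at hc
    set c := -ζ.re with hcdef
    have hcL : (1-r)/(1+r) < c := by rw [hLneg] at hc; linarith
    rcases le_or_gt 1 c with h1c | h1c
    · -- take z = 0
      have h0 : (0:ℂ) ∈ ball (0:ℂ) 1 := by simp
      have := H 0 h0
      rw [hE 0 (by simp)] at this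
      simp at this
      have : (1:ℝ) > c := lt_of_le_of_lt (le_max_right 0 c) (by simpa using this)
      linarith
    · -- take z = t * B / r
      set t : ℝ := (1-c)/(r*(1+c)) with htdef
      have hc0 : 0 < c := lt_trans hLpos hcL
      have h1pc : 0 < 1 + c := by linarith
      have ht0 : 0 < t := div_pos (by linarith) (by positivity)
      have ht1 : t < 1 := by
        rw [htdef, div_lt_one (by positivity)]
        rw [div_lt_iff₀ (by positivity)] at hcL
        nlinarith
      set z : ℂ := ((t*B/r : ℝ) : ℂ) with hzdef
      have hznorm : ‖z‖ < 1 := by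
        rw [hzdef, Complex.norm_real, Real.norm_eq_abs, abs_div, abs_mul,
          abs_of_pos ht0, abs_of_pos hr0, ← hrdef]
        rw [mul_div_assoc, div_self hr0.ne', mul_one]
        exact ht1
      have hBz : (B:ℂ)*z = ((t*r : ℝ) : ℂ) := by
        rw [hzdef]
        push_cast
        have hB2 : (B:ℝ)*B = r*r := by
          rcases abs_choice B with h | h
          · rw [hrdef, h]
          · rw [hrdef, h]; ring
        have hB2c : (B:ℂ)*B = (r:ℂ)*r := by exact_mod_cast hB2
        have hrne : (r:ℂ) ≠ 0 := by exact_mod_cast hr0.ne'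
        field_simp
        linear_combination (t:ℂ) * hB2c
      have hEz : ((1 - (B:ℂ)*z)/(1+(B:ℂ)*z)).re = (1 - t*r)/(1+t*r) := by
        rw [hBz]
        have : ((1:ℂ) - ((t*r:ℝ):ℂ))/(1+((t*r:ℝ):ℂ)) = (((1 - t*r)/(1+t*r) : ℝ) : ℂ) := by
          push_cast; ring
        rw [this, Complex.ofReal_re]
      have htr : t*r = (1-c)/(1+c) := by
        rw [htdef]; field_simp
      have hval : (1 - t*r)/(1+t*r) = c := by
        rw [htr]
        rw [div_eq_iff]
        · field_simp; ring
        · rw [htr] at *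
          have : (1:ℝ) + (1-c)/(1+c) = 2/(1+c) := by field_simp; ring
          rw [this]; positivity
      have hzball : z ∈ ball (0:ℂ) 1 := mem_ball_zero_iff.mpr hznorm
      have := H z hzball
      rw [hE z hznorm, hEz, hval] at this
      exact absurd this (not_lt.mpr (le_max_right 0 c))
  · -- reverse direction
    intro hζ z hz
    have hz' : ‖z‖ < 1 := mem_ball_zero_iff.mp hz
    rw [hE z hz']
    have hlb := hlow z hz'
    apply max_lt
    · linarith
    · rw [hLneg] at hζ; linarith
end

section
/- Let q be analytic on the open unit disk with q(0) ≠ 0 and q'(z) ≠ 0 for all z in the disk. If Re(1 + z q''(z)/q'(z) - z q'(z)/q(z)) > 0 for all z in the open unit disk (interpreting the expression where q(z) ≠ 0), then q(z) ≠ 0 for all z in the open unit disk. -/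
open Complex Metric Filter Topology

theorem stmt_9 (q : ℂ → ℂ)
    (hq : DifferentiableOn ℂ q (ball (0 : ℂ) 1))
    (hq0 : q 0 ≠ 0)
    (hq' : ∀ z ∈ ball (0 : ℂ) 1, deriv q z ≠ 0)
    (hre : ∀ z ∈ ball (0 : ℂ) 1, q z ≠ 0 →
      0 < (1 + z * deriv (deriv q) z / deriv q z - z * deriv q z / q z).re) :
    ∀ z ∈ ball (0 : ℂ) 1, q z ≠ 0 := by
  intro z₀ hz₀
  by_contra hqz₀
  have hz₀0 : z₀ ≠ 0 := by rintro rfl; exact hq0 hqz₀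
  have hAn : AnalyticOnNhd ℂ q (ball (0:ℂ) 1) := hq.analyticOnNhd isOpen_ball
  have hAn1 : AnalyticOnNhd ℂ (deriv q) (ball (0:ℂ) 1) := hAn.deriv
  have hq'0 : deriv q z₀ ≠ 0 := hq' z₀ hz₀
  set l : Filter ℝ := 𝓝[>] (0:ℝ) with hl
  set φ : ℝ → ℂ := fun t => (1 + (t:ℂ)) * z₀ with hφdef
  have hφ0 : Tendsto φ l (𝓝 z₀) := by
    have : Tendsto φ (𝓝 0) (𝓝 z₀) := by
      have : ContinuousAt φ 0 := by fun_prop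
      simpa [φ] using this.tendsto
    exact this.mono_left nhdsWithin_le_nhds
  have hφne : ∀ᶠ t in l, φ t ≠ z₀ := by
    filter_upwards [self_mem_nhdsWithin] with t ht
    have ht' : (t:ℂ) ≠ 0 := by exact_mod_cast ne_of_gt ht
    simp only [φ]
    intro h
    apply ht'
    have : ((t:ℂ)) * z₀ = 0 := by ring_nf; linear_combination h
    exact (mul_eq_zero.1 this).resolve_right hz₀0
  have hφn : Tendsto φ l (𝓝[≠] z₀) :=
    tendsto_nhdsWithin_iff.2 ⟨hφ0, hφne⟩
  -- slope tendsto
  have hder : HasDerivAt q (deriv q z₀) z₀ :=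
    ((hq.differentiableAt (isOpen_ball.mem_nhds hz₀)).hasDerivAt)
  have hslope : Tendsto (fun t => slope q z₀ (φ t)) l (𝓝 (deriv q z₀)) :=
    (hasDerivAt_iff_tendsto_slope.1 hder).comp hφn
  have hDne : ∀ᶠ t in l, slope q z₀ (φ t) ≠ 0 := hslope.eventually_ne hq'0
  have hball : ∀ᶠ t in l, φ t ∈ ball (0:ℂ) 1 :=
    hφ0.eventually (isOpen_ball.mem_nhds hz₀)
  have htpos : ∀ᶠ t in l, 0 < t := self_mem_nhdsWithin
  -- q (φ t) = slope * (t * z₀)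
  have hfac : ∀ᶠ t in l, q (φ t) = slope q z₀ (φ t) * ((t:ℂ) * z₀) := by
    filter_upwards [hφne, htpos] with t ht htp
    have hsub : φ t - z₀ = (t:ℂ) * z₀ := by simp [φ]; ring
    have htz : (t:ℂ) * z₀ ≠ 0 :=
      mul_ne_zero (by exact_mod_cast ne_of_gt htp) hz₀0
    rw [slope_def_field, hqz₀, sub_zero, hsub, div_mul_cancel₀ _ htz]
  have hqne : ∀ᶠ t in l, q (φ t) ≠ 0 := by
    filter_upwards [hfac, hDne, htpos] with t hf hD htp
    rw [hf]
    exact mul_ne_zero hD (mul_ne_zero (by exact_mod_cast ne_of_gt htp) hz₀0)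
  -- C t
  set C : ℝ → ℂ := fun t => φ t * deriv q (φ t) / (slope q z₀ (φ t) * z₀) with hC
  have hcont1 : ContinuousAt (deriv q) z₀ := (hAn1 z₀ hz₀).continuousAt
  have hderφ : Tendsto (fun t => deriv q (φ t)) l (𝓝 (deriv q z₀)) :=
    hcont1.tendsto.comp hφ0
  have hCt : Tendsto C l (𝓝 1) := by
    have hnum : Tendsto (fun t => φ t * deriv q (φ t)) l (𝓝 (z₀ * deriv q z₀)) :=
      hφ0.mul hderφ
    have hden : Tendsto (fun t => slope q z₀ (φ t) * z₀) l (𝓝 (deriv q z₀ * z₀)) :=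
      hslope.mul tendsto_const_nhds
    have := hnum.div hden (mul_ne_zero hq'0 hz₀0)
    convert this using 2
    · rfl
    rw [mul_comm z₀ (deriv q z₀), div_self (mul_ne_zero hq'0 hz₀0)]
  -- big t = z q'/q at φ t equals C t * (t:ℂ)⁻¹ eventually
  have hbig : ∀ᶠ t in l, φ t * deriv q (φ t) / q (φ t) = C t * ((t:ℝ):ℂ)⁻¹ := by
    filter_upwards [hfac, hDne, htpos] with t hf hD htp
    have ht0 : (t:ℂ) ≠ 0 := by exact_mod_cast ne_of_gt htp
    rw [hf, hC, show slope q z₀ (φ t) * ((t:ℂ) * z₀) = (slope q z₀ (φ t) * z₀) * (t:ℂ) by ring,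
      ← div_div, div_eq_mul_inv]
  -- real part of big tends to atTop
  have hCre : Tendsto (fun t => (C t).re) l (𝓝 1) := by
    have := (Complex.continuous_re.tendsto 1).comp hCt
    simpa [Function.comp_def] using this
  have hbigre : Tendsto (fun t => (φ t * deriv q (φ t) / q (φ t)).re) l atTop := by
    have h1 : Tendsto (fun t => (C t).re * t⁻¹) l atTop :=
      hCre.pos_mul_atTop one_pos tendsto_inv_nhdsGT_zero
    apply h1.congr'
    filter_upwards [hbig] with t hb
    rw [hb]
    simp [Complex.mul_re]
  -- B part tends to a constant
  have hcont2 : ContinuousAt (deriv (deriv q)) z₀ := ((hAn1.deriv) z₀ hz₀).continuousAt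
  have hBt : Tendsto (fun t => (1 + φ t * deriv (deriv q) (φ t) / deriv q (φ t)).re) l
      (𝓝 ((1 + z₀ * deriv (deriv q) z₀ / deriv q z₀).re)) := by
    have : Tendsto (fun t => 1 + φ t * deriv (deriv q) (φ t) / deriv q (φ t)) l
        (𝓝 (1 + z₀ * deriv (deriv q) z₀ / deriv q z₀)) :=
      tendsto_const_nhds.add ((hφ0.mul (hcont2.tendsto.comp hφ0)).div hderφ hq'0)
    exact (Complex.continuous_re.tendsto _).comp this
  -- full expression tends to atBot
  have hfull : Tendsto (fun t =>
      (1 + φ t * deriv (deriv q) (φ t) / deriv q (φ t) - φ t * deriv q (φ t) / q (φ t)).re)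
      l atBot := by
    have : Tendsto (fun t =>
        (1 + φ t * deriv (deriv q) (φ t) / deriv q (φ t)).re
        - (φ t * deriv q (φ t) / q (φ t)).re) l atBot := by
      have hnb : Tendsto (fun t => -(φ t * deriv q (φ t) / q (φ t)).re) l atBot :=
        tendsto_neg_atTop_atBot.comp hbigre
      simpa [sub_eq_add_neg] using hBt.add_atBot hnb
    apply this.congr
    intro t
    simp [Complex.sub_re]
  have hneg : ∀ᶠ t in l, (1 + φ t * deriv (deriv q) (φ t) / deriv q (φ t)
      - φ t * deriv q (φ t) / q (φ t)).re < 0 := hfull.eventually_lt_atBot 0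
  have : ∀ᶠ t in l, False := by
    filter_upwards [hneg, hball, hqne] with t h1 h2 h3
    exact absurd (hre _ h2 h3) (not_lt.2 h1.le)
  rcases this.exists with ⟨t, ht⟩
  exact ht
end

section
/- The function q_λ(z) = (1-z)^λ = e^{λ log(1-z)} (principal branch) for nonzero complex λ is univalent on the open unit disk if and only if |λ + 1| ≤ 1 or |λ - 1| ≤ 1. -/
open Complex Metric Set Real

private lemma norm_le_one_iff_normSq (z : ℂ) : ‖z‖ ≤ 1 ↔ Complex.normSq z ≤ 1 := by
  rw [← Complex.sq_norm]
  constructor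
  · intro h; nlinarith [norm_nonneg z]
  · intro h; nlinarith [norm_nonneg z]

private lemma cond_iff (lam : ℂ) (hlam : lam ≠ 0) :
    (‖lam + 1‖ ≤ 1 ∨ ‖lam - 1‖ ≤ 1) ↔ 1/2 ≤ |lam⁻¹.re| := by
  have hS : 0 < Complex.normSq lam := Complex.normSq_pos.mpr hlam
  have hre : lam⁻¹.re = lam.re / Complex.normSq lam := Complex.inv_re lam
  have h1 : Complex.normSq (lam + 1) = Complex.normSq lam + 2*lam.re + 1 := by
    simp [Complex.normSq_apply]; ring
  have h2 : Complex.normSq (lam - 1) = Complex.normSq lam - 2*lam.re + 1 := by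
    simp [Complex.normSq_apply]; ring
  rw [norm_le_one_iff_normSq, norm_le_one_iff_normSq, h1, h2, le_abs, hre, le_div_iff₀ hS]
  constructor
  · rintro (h | h)
    · right; rw [le_neg, div_le_iff₀ hS]; nlinarith
    · left; nlinarith
  · rintro (h | h)
    · right; nlinarith
    · left; rw [le_neg, div_le_iff₀ hS] at h; nlinarith

private lemma mem_ball_of_exp {w : ℂ} (h : rexp w.re < 2 * Real.cos w.im) :
    1 - cexp w ∈ ball (0 : ℂ) 1 := by
  rw [mem_ball, dist_zero_right]
  have h2 : ‖(1 : ℂ) - cexp w‖^2 < 1 := by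
    rw [Complex.sq_norm, Complex.normSq_apply]
    simp only [Complex.sub_re, Complex.sub_im, Complex.one_re, Complex.one_im,
      Complex.exp_re, Complex.exp_im]
    have hsc : Real.sin w.im * Real.sin w.im + Real.cos w.im * Real.cos w.im = 1 := by
      have := Real.sin_sq_add_cos_sq w.im; nlinarith
    have key : (1 - rexp w.re * Real.cos w.im) * (1 - rexp w.re * Real.cos w.im) +
        (0 - rexp w.re * Real.sin w.im) * (0 - rexp w.re * Real.sin w.im)
        = 1 - 2 * rexp w.re * Real.cos w.im + rexp w.re * rexp w.re := by
      linear_combination (rexp w.re * rexp w.re) * hsc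
    rw [key]
    nlinarith [mul_pos (Real.exp_pos w.re) (sub_pos.mpr h)]
  nlinarith [norm_nonneg ((1:ℂ) - cexp w)]

private lemma re_pos_of_mem_ball {z : ℂ} (hz : z ∈ ball (0 : ℂ) 1) : 0 < (1 - z).re := by
  rw [mem_ball, dist_zero_right] at hz
  have h := lt_of_le_of_lt (Complex.abs_re_le_norm z) hz
  simp only [Complex.sub_re, Complex.one_re]
  have := abs_lt.mp h
  linarith [this.2]

private lemma arg_lt {z : ℂ} (hz : z ∈ ball (0 : ℂ) 1) : |(1 - z).arg| < π/2 :=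
  Complex.abs_arg_lt_pi_div_two_iff.mpr (Or.inl (re_pos_of_mem_ball hz))

private lemma ne_zero_of_mem_ball {z : ℂ} (hz : z ∈ ball (0 : ℂ) 1) : (1 : ℂ) - z ≠ 0 := by
  intro h
  have := re_pos_of_mem_ball hz
  rw [h] at this
  simp at this

theorem stmt_15 (lam : ℂ) (hlam : lam ≠ 0) :
    InjOn (fun z : ℂ => (1 - z) ^ lam) (ball (0 : ℂ) 1) ↔
      ‖lam + 1‖ ≤ 1 ∨ ‖lam - 1‖ ≤ 1 := by
  rw [cond_iff lam hlam]
  have hπ : (0:ℝ) < π := Real.pi_pos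
  constructor
  · -- injective → condition
    intro hInj
    by_contra hc
    push_neg at hc
    set a := lam⁻¹.re with ha
    set b := lam⁻¹.im with hb
    have hlaminv : lam⁻¹ ≠ 0 := inv_ne_zero hlam
    have habs : |a| < 1/2 := hc
    have haa : |π * a| < π/2 := by
      rw [abs_mul, abs_of_pos hπ]
      have := mul_lt_mul_of_pos_left habs hπ
      linarith
    have haa' := abs_lt.mp haa
    have hcos : 0 < Real.cos (π * a) := Real.cos_pos_of_mem_Ioo ⟨haa'.1, haa'.2⟩
    set μ : ℂ := ((2*π : ℝ) : ℂ) * (I * lam⁻¹) with hμ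
    have hμ_im : μ.im = 2*π*a := by
      simp [hμ, Complex.mul_im, Complex.mul_re, Complex.I_re, Complex.I_im]
      exact (by rw [ha, Complex.inv_re])
    have hμ_re : μ.re = -(2*π*b) := by
      simp [hμ, Complex.mul_im, Complex.mul_re, Complex.I_re, Complex.I_im]
      exact (by rw [hb, Complex.inv_im])
    set x : ℝ := Real.log (Real.cos (π*a)) - |π * b| with hx
    set w₁ : ℂ := (x:ℂ) + μ/2 with hw₁
    set w₂ : ℂ := (x:ℂ) - μ/2 with hw₂
    have hw₁im : w₁.im = π*a := by
      simp [hw₁, hμ_im]; ring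
    have hw₂im : w₂.im = -(π*a) := by
      simp [hw₂, hμ_im]; ring
    have hw₁re : w₁.re = x - π*b := by
      simp [hw₁, hμ_re]; ring
    have hw₂re : w₂.re = x + π*b := by
      simp [hw₂, hμ_re]; ring
    have hexplog : rexp (Real.log (Real.cos (π*a))) = Real.cos (π*a) := Real.exp_log hcos
    have hball₁ : (1 : ℂ) - cexp w₁ ∈ ball (0:ℂ) 1 := by
      apply mem_ball_of_exp
      rw [hw₁re, hw₁im]
      have : rexp (x - π*b) ≤ Real.cos (π*a) := by
        rw [← hexplog]
        apply Real.exp_le_exp.mpr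
        rw [hx]
        have := neg_abs_le (π*b)
        linarith
      linarith
    have hball₂ : (1 : ℂ) - cexp w₂ ∈ ball (0:ℂ) 1 := by
      apply mem_ball_of_exp
      rw [hw₂re, hw₂im, Real.cos_neg]
      have : rexp (x + π*b) ≤ Real.cos (π*a) := by
        rw [← hexplog]
        apply Real.exp_le_exp.mpr
        rw [hx]
        have := le_abs_self (π*b)
        linarith
      linarith
    have hμlam : μ * lam = 2*π*I := by
      rw [hμ]
      field_simp
      norm_num
    have hμne : μ ≠ 0 := by
      rw [hμ]
      apply mul_ne_zero
      · simp [Real.pi_ne_zero]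
      · exact mul_ne_zero I_ne_zero hlaminv
    have hlog₁ : Complex.log (cexp w₁) = w₁ := Complex.log_exp (by rw [hw₁im]; linarith) (by rw [hw₁im]; linarith)
    have hlog₂ : Complex.log (cexp w₂) = w₂ := Complex.log_exp (by rw [hw₂im]; linarith) (by rw [hw₂im]; linarith)
    have hfe : (fun z : ℂ => (1 - z) ^ lam) (1 - cexp w₁) = (fun z : ℂ => (1 - z) ^ lam) (1 - cexp w₂) := by
      simp only [sub_sub_cancel]
      rw [Complex.cpow_def_of_ne_zero (Complex.exp_ne_zero w₁),
          Complex.cpow_def_of_ne_zero (Complex.exp_ne_zero w₂), hlog₁, hlog₂]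
      have hww : w₁ * lam = w₂ * lam + 2*π*I := by
        rw [hw₁, hw₂]
        linear_combination hμlam
      rw [hww, Complex.exp_add, Complex.exp_two_pi_mul_I, mul_one]
    have hne : (1 : ℂ) - cexp w₁ ≠ 1 - cexp w₂ := by
      intro h
      have he : cexp w₁ = cexp w₂ := by
        have := sub_right_injective h
        exact this
      have hw : w₁ = w₂ := by rw [← hlog₁, ← hlog₂, he]
      apply hμne
      have : (x:ℂ) + μ/2 = (x:ℂ) - μ/2 := hw
      linear_combination this
    exact hne (hInj hball₁ hball₂ hfe)
  · -- condition → injective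
    intro hcond z₁ hz₁ z₂ hz₂ hf
    simp only at hf
    have h1 := ne_zero_of_mem_ball hz₁
    have h2 := ne_zero_of_mem_ball hz₂
    rw [Complex.cpow_def_of_ne_zero h1, Complex.cpow_def_of_ne_zero h2] at hf
    obtain ⟨n, hn⟩ := Complex.exp_eq_exp_iff_exists_int.mp hf
    by_cases hn0 : n = 0
    · subst hn0
      simp only [Int.cast_zero, zero_mul, add_zero] at hn
      have hlog : Complex.log (1 - z₁) = Complex.log (1 - z₂) := mul_right_cancel₀ hlam hn
      have h12 : (1:ℂ) - z₁ = 1 - z₂ := by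
        rw [← Complex.exp_log h1, ← Complex.exp_log h2, hlog]
      exact sub_right_injective h12
    · exfalso
      have hd2 : Complex.log (1 - z₁) - Complex.log (1 - z₂)
          = (((n:ℝ) * (2*π) : ℝ) : ℂ) * (I * lam⁻¹) := by
        push_cast
        field_simp
        linear_combination hn
      have him : (Complex.log (1 - z₁) - Complex.log (1 - z₂)).im
          = (n:ℝ) * (2*π) * lam⁻¹.re := by
        rw [hd2]
        simp [Complex.mul_im, Complex.mul_re, Complex.I_re, Complex.I_im]
      have him2 : (Complex.log (1 - z₁) - Complex.log (1 - z₂)).im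
          = (1-z₁).arg - (1-z₂).arg := by
        simp [Complex.sub_im, Complex.log_im]
      have ha1 := arg_lt hz₁
      have ha2 := arg_lt hz₂
      have h1n : (1:ℝ) ≤ |(n:ℝ)| := by exact_mod_cast Int.one_le_abs hn0
      have hlt : |(1-z₁).arg - (1-z₂).arg| < π := by
        calc |(1-z₁).arg - (1-z₂).arg| ≤ |(1-z₁).arg| + |(1-z₂).arg| := abs_sub _ _
        _ < π := by linarith
      rw [← him2, him, abs_mul, abs_mul, abs_of_pos (by linarith : (0:ℝ) < 2*π)] at hlt
      have r1 : π ≤ 2*π*|lam⁻¹.re| := by nlinarith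
      have r2 : 2*π*|lam⁻¹.re| ≤ |(n:ℝ)| * (2*π) * |lam⁻¹.re| := by
        nlinarith [mul_nonneg (sub_nonneg.mpr h1n)
          (mul_nonneg (by positivity : (0:ℝ) ≤ 2*π) (abs_nonneg lam⁻¹.re))]
      linarith
end
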